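/- arXiv:1909.01338 — 2 statements merged into one kernel-verified Lean document; each statement's English description precedes it below -/
import Mathlib

section
/- Let K/ℚ and K'/ℚ be finite Galois extensions of number fields with K ∩ K' = ℚ. Then the absolute discriminant D_{K'K} of the compositum divides D_K^{[K':ℚ]} · D_{K'}^{[K:ℚ]}. -/
set_option synthInstance.maxHeartbeats 1000000
set_option maxHeartbeats 1000000

open IntermediateField Module NumberField

theorem DCD.comap_facts
    (K K' : IntermediateField ℚ (AlgebraicClosure ℚ))
    [FiniteDimensional ℚ K] [IsGalois ℚ K]
    [FiniteDimensional ℚ K'] [IsGalois ℚ K']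
    (h : K ⊓ K' = ⊥) :
    ∃ A B : IntermediateField ℚ ↥(K ⊔ K'),
      (∀ x : ↥(K ⊔ K'), x ∈ A ↔ (x : AlgebraicClosure ℚ) ∈ K) ∧
      (∀ x : ↥(K ⊔ K'), x ∈ B ↔ (x : AlgebraicClosure ℚ) ∈ K') ∧
      A ⊔ B = ⊤ ∧ A ⊓ B = ⊥ ∧
      Nonempty (↥A ≃ₐ[ℚ] ↥K) ∧ Nonempty (↥B ≃ₐ[ℚ] ↥K') := by
  set L := K ⊔ K' with hL
  let v := L.val
  have hv : Function.Injective v := Subtype.val_injective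
  let A := comap v K
  let B := comap v K'
  have memA : ∀ x : ↥L, x ∈ A ↔ (x : AlgebraicClosure ℚ) ∈ K := fun x => Iff.rfl
  have memB : ∀ x : ↥L, x ∈ B ↔ (x : AlgebraicClosure ℚ) ∈ K' := fun x => Iff.rfl
  have mapA : map v A = K := by
    rw [map_comap_eq, fieldRange_val]
    exact inf_of_le_left le_sup_left
  have mapB : map v B = K' := by
    rw [map_comap_eq, fieldRange_val]
    exact inf_of_le_left le_sup_right
  have mapT : map v ⊤ = L := by
    ext x
    constructor
    · rintro ⟨y, -, rfl⟩; exact y.2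
    · intro hx; exact ⟨⟨x, hx⟩, trivial, rfl⟩
  refine ⟨A, B, memA, memB, ?_, ?_, ?_, ?_⟩
  · apply map_injective v
    exact (IntermediateField.map_sup A B v).trans (by rw [mapA, mapB]; exact mapT.symm)
  · rw [eq_bot_iff]
    rintro x ⟨hxA, hxB⟩
    have hx : (x : AlgebraicClosure ℚ) ∈ K ⊓ K' := ⟨hxA, hxB⟩
    rw [h, IntermediateField.mem_bot] at hx
    obtain ⟨q, hq⟩ := hx
    rw [IntermediateField.mem_bot]
    exact ⟨q, hv ((v.commutes q).trans hq)⟩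
  · exact ⟨(IntermediateField.equivMap A v).trans (IntermediateField.equivOfEq mapA)⟩
  · exact ⟨(IntermediateField.equivMap B v).trans (IntermediateField.equivOfEq mapB)⟩

theorem DCD.finrank_sup
    (K K' : IntermediateField ℚ (AlgebraicClosure ℚ))
    [FiniteDimensional ℚ K] [IsGalois ℚ K]
    [FiniteDimensional ℚ K'] [IsGalois ℚ K']
    (h : K ⊓ K' = ⊥) :
    finrank ℚ ↥(K ⊔ K') = finrank ℚ ↥K * finrank ℚ ↥K' := by
  classical
  haveI : IsGalois ℚ ↥(K ⊔ K') := @FiniteGaloisIntermediateField.instIsGaloisSubtypeMemIntermediateFieldMax _ _ _ _ _ K K' ‹_› ‹_›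
  obtain ⟨A, B, -, -, hsup, hinf, ⟨eA⟩, ⟨eB⟩⟩ := DCD.comap_facts K K' h
  haveI : IsGalois ℚ ↥A := IsGalois.of_algEquiv eA.symm
  haveI : IsGalois ℚ ↥B := IsGalois.of_algEquiv eB.symm
  haveI : FiniteDimensional ℚ ↥A := LinearEquiv.finiteDimensional eA.symm.toLinearEquiv
  haveI : FiniteDimensional ℚ ↥B := LinearEquiv.finiteDimensional eB.symm.toLinearEquiv
  let e := IsGalois.intermediateFieldEquivSubgroup (F := ℚ) (E := ↥(K ⊔ K'))
  have h1 : A.fixingSubgroup ⊓ B.fixingSubgroup = ⊥ := by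
    have h1 := e.map_sup A B
    rw [hsup, OrderIso.map_top] at h1
    exact (congrArg OrderDual.ofDual h1).symm
  have h2 : A.fixingSubgroup ⊔ B.fixingSubgroup = ⊤ := by
    have h2 := e.map_inf A B
    rw [hinf, OrderIso.map_bot] at h2
    exact (congrArg OrderDual.ofDual h2).symm
  haveI : B.fixingSubgroup.Normal := @IsGalois.fixingSubgroup_normal_of_isGalois _ _ _ _ _ B _ ‹_›
  have hcompl : A.fixingSubgroup.IsComplement' B.fixingSubgroup :=
    Subgroup.isComplement'_of_disjoint_and_mul_eq_univ (disjoint_iff.mpr h1)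
      (by rw [← Subgroup.mul_normal, h2, Subgroup.coe_top])
  have hcard := hcompl.card_mul
  rw [IsGalois.card_fixingSubgroup_eq_finrank A, IsGalois.card_fixingSubgroup_eq_finrank B,
    IsGalois.card_aut_eq_finrank] at hcard
  have hA : finrank ℚ ↥A * finrank ↥A ↥(K ⊔ K') = finrank ℚ ↥(K ⊔ K') :=
    Module.finrank_mul_finrank ℚ ↥A ↥(K ⊔ K')
  have hB : finrank ℚ ↥B * finrank ↥B ↥(K ⊔ K') = finrank ℚ ↥(K ⊔ K') :=
    Module.finrank_mul_finrank ℚ ↥B ↥(K ⊔ K')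
  have heA : finrank ℚ ↥A = finrank ℚ ↥K := eA.toLinearEquiv.finrank_eq
  have heB : finrank ℚ ↥B = finrank ℚ ↥K' := eB.toLinearEquiv.finrank_eq
  have hN : 0 < finrank ℚ ↥(K ⊔ K') := finrank_pos
  apply Nat.eq_of_mul_eq_mul_right hN
  calc finrank ℚ ↥(K ⊔ K') * finrank ℚ ↥(K ⊔ K')
      = (finrank ℚ ↥A * finrank ↥A ↥(K ⊔ K')) * (finrank ℚ ↥B * finrank ↥B ↥(K ⊔ K')) := by
        rw [hA, hB]
    _ = (finrank ℚ ↥A * finrank ℚ ↥B) * (finrank ↥A ↥(K ⊔ K') * finrank ↥B ↥(K ⊔ K')) := by ring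
    _ = (finrank ℚ ↥K * finrank ℚ ↥K') * finrank ℚ ↥(K ⊔ K') := by rw [heA, heB, hcard]

theorem DCD.emb_bij
    (K K' : IntermediateField ℚ (AlgebraicClosure ℚ))
    [FiniteDimensional ℚ K] [IsGalois ℚ K]
    [FiniteDimensional ℚ K'] [IsGalois ℚ K']
    (h : K ⊓ K' = ⊥) :
    Function.Bijective (fun σ : ↥(K ⊔ K') →ₐ[ℚ] (AlgebraicClosure ℚ) =>
      (σ.comp (IntermediateField.inclusion (le_sup_left : K ≤ K ⊔ K')),
       σ.comp (IntermediateField.inclusion (le_sup_right : K' ≤ K ⊔ K')))) := by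
  classical
  obtain ⟨A, B, memA, memB, hsup, -, -, -⟩ := DCD.comap_facts K K' h
  have hinj : Function.Injective (fun σ : ↥(K ⊔ K') →ₐ[ℚ] (AlgebraicClosure ℚ) =>
      (σ.comp (IntermediateField.inclusion (le_sup_left : K ≤ K ⊔ K')),
       σ.comp (IntermediateField.inclusion (le_sup_right : K' ≤ K ⊔ K')))) := by
    intro σ₁ σ₂ heq
    simp only [Prod.mk.injEq] at heq
    let E0 : IntermediateField ℚ ↥(K ⊔ K') :=
      { carrier := {x | σ₁ x = σ₂ x}
        mul_mem' := fun {a b} ha hb => by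
          simp only [Set.mem_setOf_eq, map_mul] at *; rw [ha, hb]
        one_mem' := by simp
        add_mem' := fun {a b} ha hb => by
          simp only [Set.mem_setOf_eq, map_add] at *; rw [ha, hb]
        zero_mem' := by simp
        algebraMap_mem' := fun q => by simp [AlgHom.commutes]
        inv_mem' := fun x hx => by
          simp only [Set.mem_setOf_eq, map_inv₀] at *; rw [hx] }
    have hA : A ≤ E0 := by
      intro x hx
      have hx' : (x : AlgebraicClosure ℚ) ∈ K := (memA x).1 hx
      have hxe : IntermediateField.inclusion (le_sup_left : K ≤ K ⊔ K') ⟨↑x, hx'⟩ = x :=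
        Subtype.ext rfl
      show σ₁ x = σ₂ x
      rw [← hxe]
      exact congrFun (congrArg DFunLike.coe heq.1) ⟨↑x, hx'⟩
    have hB : B ≤ E0 := by
      intro x hx
      have hx' : (x : AlgebraicClosure ℚ) ∈ K' := (memB x).1 hx
      have hxe : IntermediateField.inclusion (le_sup_right : K' ≤ K ⊔ K') ⟨↑x, hx'⟩ = x :=
        Subtype.ext rfl
      show σ₁ x = σ₂ x
      rw [← hxe]
      exact congrFun (congrArg DFunLike.coe heq.2) ⟨↑x, hx'⟩
    have htop : (⊤ : IntermediateField ℚ ↥(K ⊔ K')) ≤ E0 := hsup ▸ sup_le hA hB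
    exact AlgHom.ext fun x => htop (IntermediateField.mem_top)
  haveI : Algebra.IsSeparable ℚ ↥K := IsGalois.to_isSeparable
  haveI : Algebra.IsSeparable ℚ ↥K' := IsGalois.to_isSeparable
  haveI : IsGalois ℚ ↥(K ⊔ K') := @FiniteGaloisIntermediateField.instIsGaloisSubtypeMemIntermediateFieldMax _ _ _ _ _ K K' ‹_› ‹_›
  haveI : Algebra.IsSeparable ℚ ↥(K ⊔ K') := IsGalois.to_isSeparable
  have hcard : Fintype.card (↥(K ⊔ K') →ₐ[ℚ] (AlgebraicClosure ℚ)) =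
      Fintype.card ((↥K →ₐ[ℚ] (AlgebraicClosure ℚ)) × (↥K' →ₐ[ℚ] (AlgebraicClosure ℚ))) := by
    rw [AlgHom.card, Fintype.card_prod, AlgHom.card, AlgHom.card, DCD.finrank_sup K K' h]
  exact (Fintype.bijective_iff_injective_and_card _).2 ⟨hinj, hcard⟩

theorem DCD.trace_mul
    (K K' : IntermediateField ℚ (AlgebraicClosure ℚ))
    [FiniteDimensional ℚ K] [IsGalois ℚ K]
    [FiniteDimensional ℚ K'] [IsGalois ℚ K']
    (h : K ⊓ K' = ⊥) (x : ↥K) (y : ↥K') :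
    Algebra.trace ℚ ↥(K ⊔ K')
      ((IntermediateField.inclusion (le_sup_left : K ≤ K ⊔ K')) x *
       (IntermediateField.inclusion (le_sup_right : K' ≤ K ⊔ K')) y) =
    Algebra.trace ℚ ↥K x * Algebra.trace ℚ ↥K' y := by
  classical
  haveI : Algebra.IsSeparable ℚ ↥K := IsGalois.to_isSeparable
  haveI : Algebra.IsSeparable ℚ ↥K' := IsGalois.to_isSeparable
  haveI : IsGalois ℚ ↥(K ⊔ K') := @FiniteGaloisIntermediateField.instIsGaloisSubtypeMemIntermediateFieldMax _ _ _ _ _ K K' ‹_› ‹_›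
  haveI : Algebra.IsSeparable ℚ ↥(K ⊔ K') := IsGalois.to_isSeparable
  apply (algebraMap ℚ (AlgebraicClosure ℚ)).injective
  rw [RingHom.map_mul, trace_eq_sum_embeddings (AlgebraicClosure ℚ),
    trace_eq_sum_embeddings (AlgebraicClosure ℚ),
    trace_eq_sum_embeddings (AlgebraicClosure ℚ), Finset.sum_mul_sum]
  exact (Fintype.sum_bijective _ (DCD.emb_bij K K' h) _
      (fun p : (↥K →ₐ[ℚ] AlgebraicClosure ℚ) × (↥K' →ₐ[ℚ] AlgebraicClosure ℚ) => p.1 x * p.2 y)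
      (fun σ => by simp; rfl)).trans (Fintype.sum_prod_type _)

theorem discr_compositum_dvd
    (K K' : IntermediateField ℚ (AlgebraicClosure ℚ))
    [FiniteDimensional ℚ K] [IsGalois ℚ K]
    [FiniteDimensional ℚ K'] [IsGalois ℚ K']
    [NumberField ↥K] [NumberField ↥K'] [NumberField ↥(K ⊔ K')]
    (h : K ⊓ K' = ⊥) :
    (NumberField.discr ↥(K ⊔ K')).natAbs ∣
      (NumberField.discr ↥K).natAbs ^ (Module.finrank ℚ ↥K') *
        (NumberField.discr ↥K').natAbs ^ (Module.finrank ℚ ↥K) := by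
  classical
  let ι₁ : ↥K →ₐ[ℚ] ↥(K ⊔ K') := IntermediateField.inclusion le_sup_left
  let ι₂ : ↥K' →ₐ[ℚ] ↥(K ⊔ K') := IntermediateField.inclusion le_sup_right
  let I := Module.Free.ChooseBasisIndex ℤ (𝓞 ↥K)
  let J := Module.Free.ChooseBasisIndex ℤ (𝓞 ↥K')
  let IL := Module.Free.ChooseBasisIndex ℤ (𝓞 ↥(K ⊔ K'))
  let bK := NumberField.integralBasis ↥K
  let bK' := NumberField.integralBasis ↥K'
  let b : I × J → ↥(K ⊔ K') := fun p => ι₁ (bK p.1) * ι₂ (bK' p.2)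
  -- cardinalities
  have hcI : Fintype.card I = finrank ℚ ↥K := by
    rw [← Module.finrank_eq_card_chooseBasisIndex, NumberField.RingOfIntegers.rank]
  have hcJ : Fintype.card J = finrank ℚ ↥K' := by
    rw [← Module.finrank_eq_card_chooseBasisIndex, NumberField.RingOfIntegers.rank]
  have hcIL : Fintype.card IL = finrank ℚ ↥(K ⊔ K') := by
    rw [← Module.finrank_eq_card_chooseBasisIndex, NumberField.RingOfIntegers.rank]
  -- Step D : the discriminant of the product family
  have hTM : Algebra.traceMatrix ℚ b =
      Matrix.kroneckerMap (· * ·) (Algebra.traceMatrix ℚ ⇑bK) (Algebra.traceMatrix ℚ ⇑bK') := by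
    funext p q
    have hmul : b p * b q = ι₁ (bK p.1 * bK q.1) * ι₂ (bK' p.2 * bK' q.2) := by
      simp only [b, map_mul]; ring
    simp only [Algebra.traceMatrix_apply, Algebra.traceForm_apply, Matrix.kroneckerMap]
    rw [hmul]
    exact DCD.trace_mul K K' h _ _
  have hdiscr_b : Algebra.discr ℚ b =
      (NumberField.discr ↥K : ℚ) ^ finrank ℚ ↥K' *
        (NumberField.discr ↥K' : ℚ) ^ finrank ℚ ↥K := by
    rw [Algebra.discr_def, hTM, Matrix.det_kronecker, ← Algebra.discr_def, ← Algebra.discr_def,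
      ← NumberField.coe_discr, ← NumberField.coe_discr, hcI, hcJ]
  -- Step E : express the family in terms of the integral basis of the compositum
  have hint : ∀ p : I × J, IsIntegral ℤ (b p) := by
    intro p
    have h1 : IsIntegral ℤ (bK p.1) := by
      rw [NumberField.integralBasis_apply]
      exact NumberField.RingOfIntegers.isIntegral_coe _
    have h2 : IsIntegral ℤ (bK' p.2) := by
      rw [NumberField.integralBasis_apply]
      exact NumberField.RingOfIntegers.isIntegral_coe _
    exact (h1.map ι₁.toRingHom.toIntAlgHom).mul (h2.map ι₂.toRingHom.toIntAlgHom)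
  let z : I × J → 𝓞 ↥(K ⊔ K') := fun p => IsIntegralClosure.mk' (𝓞 ↥(K ⊔ K')) (b p) (hint p)
  have hz : ∀ p, algebraMap (𝓞 ↥(K ⊔ K')) ↥(K ⊔ K') (z p) = b p := fun p =>
    IsIntegralClosure.algebraMap_mk' _ _ _
  have hcard : Fintype.card IL = Fintype.card (I × J) := by
    rw [Fintype.card_prod, hcI, hcJ, hcIL, DCD.finrank_sup K K' h]
  let g : IL ≃ I × J := Fintype.equivOfCardEq hcard
  let eZ := (NumberField.RingOfIntegers.basis ↥(K ⊔ K')).reindex g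
  let e' := (NumberField.integralBasis ↥(K ⊔ K')).reindex g
  have he' : ∀ q, e' q = algebraMap (𝓞 ↥(K ⊔ K')) ↥(K ⊔ K') (eZ q) := by
    intro q
    simp only [e', eZ, Basis.reindex_apply, NumberField.integralBasis_apply]
  let P : Matrix (I × J) (I × J) ℤ := fun q p => eZ.repr (z p) q
  let Pℚ : Matrix (I × J) (I × J) ℚ := P.map (algebraMap ℤ ℚ)
  have hb : Matrix.vecMul ⇑e' (Pℚ.map ⇑(algebraMap ℚ ↥(K ⊔ K'))) = b := by
    funext p
    have : (Matrix.vecMul ⇑e' (Pℚ.map ⇑(algebraMap ℚ ↥(K ⊔ K')))) p =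
        ∑ q, e' q * algebraMap ℚ ↥(K ⊔ K') ((P q p : ℤ) : ℚ) := by
      simp [Matrix.vecMul, dotProduct, Pℚ, Matrix.map_apply]
    rw [this, ← hz p]
    conv_rhs => rw [← Basis.sum_repr eZ (z p), map_sum]
    refine Finset.sum_congr rfl fun q _ => ?_
    simp only [he' q, map_zsmul, map_intCast, zsmul_eq_mul]
    rw [map_mul, map_intCast]
    exact mul_comm _ _
  have hd := Algebra.discr_of_matrix_vecMul ⇑e' Pℚ
  rw [hb] at hd
  have he'd : Algebra.discr ℚ ⇑e' = (NumberField.discr ↥(K ⊔ K') : ℚ) := by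
    have := Algebra.discr_reindex ℚ (NumberField.integralBasis ↥(K ⊔ K')) g
    rw [NumberField.coe_discr, ← this]
    congr 1
    funext q
    simp [e', Basis.reindex_apply]
  have hPdet : Pℚ.det = ((P.det : ℤ) : ℚ) := (RingHom.map_det (algebraMap ℤ ℚ) P).symm
  have key : (NumberField.discr ↥K : ℚ) ^ finrank ℚ ↥K' *
      (NumberField.discr ↥K' : ℚ) ^ finrank ℚ ↥K =
      ((P.det : ℤ) : ℚ) ^ 2 * (NumberField.discr ↥(K ⊔ K') : ℚ) := by
    rw [← hdiscr_b, hd, he'd, hPdet]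
  have keyZ : NumberField.discr ↥K ^ finrank ℚ ↥K' *
      NumberField.discr ↥K' ^ finrank ℚ ↥K =
      P.det ^ 2 * NumberField.discr ↥(K ⊔ K') := by
    exact_mod_cast key
  have hdvd : NumberField.discr ↥(K ⊔ K') ∣
      NumberField.discr ↥K ^ finrank ℚ ↥K' * NumberField.discr ↥K' ^ finrank ℚ ↥K :=
    keyZ ▸ Dvd.intro_left _ rfl
  have := Int.natAbs_dvd_natAbs.mpr hdvd
  rwa [Int.natAbs_mul, Int.natAbs_pow, Int.natAbs_pow] at this
end

section
/- Let x ≥ 3, 0 < ε < 1/4, and let F(z) = e^{−(1+ε/log x)z} · ((1 − e^{(1/2+ε/log x)z})/(−z)) · ((1 − e^{εz/(2 log x)})/(−εz/(2 log x)))². Then for s = σ + it with σ > 0, one has |F(−s log x)| ≤ e^{σε} · x^{σ} · min{ 1, (1 + x^{−σ/2})/(|s| log x) · (4/(ε|s|))² }. -/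
open Complex Set in
lemma norm_one_sub_cexp_le (w : ℂ) (hw : w.re ≤ 0) : ‖1 - Complex.exp w‖ ≤ ‖w‖ := by
  rw [norm_sub_rev]
  have hderiv : ∀ u ∈ Icc (0:ℝ) 1,
      HasDerivWithinAt (fun t : ℝ => Complex.exp ((t:ℂ) * w))
        (Complex.exp ((u:ℂ) * w) * w) (Icc (0:ℝ) 1) u := by
    intro u _
    have h1 : HasDerivAt (fun t : ℝ => ((t:ℂ)) * w) w u := by
      simpa using (Complex.ofRealCLM.hasDerivAt (x := u)).mul_const w
    exact (h1.cexp).hasDerivWithinAt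
  have hbound : ∀ u ∈ Ico (0:ℝ) 1, ‖Complex.exp ((u:ℂ) * w) * w‖ ≤ ‖w‖ := by
    intro u hu
    rw [norm_mul, Complex.norm_exp]
    have h2 : ((u:ℂ) * w).re = u * w.re := by simp
    rw [h2]
    have h3 : Real.exp (u * w.re) ≤ 1 := by
      rw [Real.exp_le_one_iff]
      exact mul_nonpos_of_nonneg_of_nonpos hu.1 hw
    nlinarith [norm_nonneg w, Real.exp_pos (u * w.re)]
  have key := norm_image_sub_le_of_norm_deriv_le_segment_01' hderiv hbound
  simpa using key

lemma norm_one_sub_cexp_le' (w : ℂ) : ‖1 - Complex.exp w‖ ≤ 1 + Real.exp w.re := by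
  calc ‖1 - Complex.exp w‖ ≤ ‖(1:ℂ)‖ + ‖Complex.exp w‖ := norm_sub_le _ _
    _ = 1 + Real.exp w.re := by rw [norm_one, Complex.norm_exp]

open Complex in
theorem weight_laplace_bound (x ε : ℝ) (hx : 3 ≤ x) (hε0 : 0 < ε) (hε : ε < 1 / 4)
    (σ t : ℝ) (hσ : 0 < σ) :
    ‖(fun z : ℂ =>
        Complex.exp (-(1 + (ε : ℂ) / (Real.log x : ℂ)) * z) *
          ((1 - Complex.exp ((1 / 2 + (ε : ℂ) / (Real.log x : ℂ)) * z)) / (-z)) *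
            ((1 - Complex.exp ((ε : ℂ) * z / (2 * (Real.log x : ℂ)))) /
              (-((ε : ℂ) * z / (2 * (Real.log x : ℂ))))) ^ 2)
        (-((σ : ℂ) + (t : ℂ) * Complex.I) * (Real.log x : ℂ))‖
      ≤ Real.exp (σ * ε) * x ^ σ *
        min 1 ((1 + x ^ (-σ / 2)) / (‖(σ : ℂ) + (t : ℂ) * Complex.I‖ * Real.log x) *
          (4 / (ε * ‖(σ : ℂ) + (t : ℂ) * Complex.I‖)) ^ 2) := by
  have hx0 : (0:ℝ) < x := by linarith
  set L : ℝ := Real.log x with hLdef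
  have hL : 1 < L := by
    rw [hLdef, Real.lt_log_iff_exp_lt hx0]
    calc Real.exp 1 < 2.7182818286 := Real.exp_one_lt_d9
      _ < 3 := by norm_num
      _ ≤ x := hx
  have hL0 : (0:ℝ) < L := by linarith
  have hLc : (L:ℂ) ≠ 0 := by exact_mod_cast ne_of_gt hL0
  set s : ℂ := (σ:ℂ) + (t:ℂ) * Complex.I with hs
  have hsre : s.re = σ := by simp [hs]
  have hsnorm : σ ≤ ‖s‖ := by
    calc σ = |σ| := (abs_of_pos hσ).symm
      _ = |s.re| := by rw [hsre]
      _ ≤ ‖s‖ := by exact Complex.abs_re_le_norm s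
  have hs0 : 0 < ‖s‖ := lt_of_lt_of_le hσ hsnorm
  -- rewrite the three exponential arguments
  have e1 : -(1 + (ε:ℂ)/(L:ℂ)) * (-s*(L:ℂ)) = ((L + ε : ℝ):ℂ) * s := by
    push_cast; field_simp
  have e2 : (1/2 + (ε:ℂ)/(L:ℂ)) * (-s*(L:ℂ)) = -(((L/2 + ε : ℝ):ℂ) * s) := by
    push_cast; field_simp
  have e3 : (ε:ℂ) * (-s*(L:ℂ)) / (2*(L:ℂ)) = -(((ε/2 : ℝ):ℂ) * s) := by
    push_cast; field_simp
  show ‖Complex.exp (-(1 + (ε:ℂ)/(L:ℂ)) * (-s*(L:ℂ))) *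
      ((1 - Complex.exp ((1/2 + (ε:ℂ)/(L:ℂ)) * (-s*(L:ℂ)))) / (-(-s*(L:ℂ)))) *
      ((1 - Complex.exp ((ε:ℂ) * (-s*(L:ℂ)) / (2*(L:ℂ)))) /
        (-((ε:ℂ) * (-s*(L:ℂ)) / (2*(L:ℂ))))) ^ 2‖ ≤ _
  have e4 : -(-s*(L:ℂ)) = s * (L:ℂ) := by ring
  rw [e1, e2, e3, e4, neg_neg]
  rw [norm_mul, norm_mul, norm_pow, norm_div, norm_div]
  -- factor A
  have hA : ‖Complex.exp (((L + ε : ℝ):ℂ) * s)‖ = Real.exp (σ * ε) * x ^ σ := by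
    rw [Complex.norm_exp]
    have : (((L + ε : ℝ):ℂ) * s).re = (L + ε) * σ := by
      simp [Complex.mul_re, hsre]
    rw [this, Real.rpow_def_of_pos hx0, ← hLdef, ← Real.exp_add]
    ring_nf
  rw [hA]
  -- denominators
  have hdB : ‖s * (L:ℂ)‖ = ‖s‖ * L := by
    rw [norm_mul, Complex.norm_real, Real.norm_eq_abs, abs_of_pos hL0]
  have hdC : ‖((ε/2 : ℝ):ℂ) * s‖ = ε/2 * ‖s‖ := by
    rw [norm_mul, Complex.norm_real, Real.norm_eq_abs,
      abs_of_pos (by linarith : (0:ℝ) < ε/2)]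
  rw [hdB, hdC]
  -- numerator bounds
  set nB := ‖1 - Complex.exp (-(((L/2 + ε : ℝ):ℂ) * s))‖ with hnB
  set nC := ‖1 - Complex.exp (-(((ε/2 : ℝ):ℂ) * s))‖ with hnC
  have hreB : (-(((L/2 + ε : ℝ):ℂ) * s)).re = -((L/2 + ε) * σ) := by
    simp [Complex.mul_re, hsre]
  have hreC : (-(((ε/2 : ℝ):ℂ) * s)).re = -(ε/2 * σ) := by
    simp [Complex.mul_re, hsre]
  have hB1 : nB ≤ (L/2 + ε) * ‖s‖ := by
    have := norm_one_sub_cexp_le (-(((L/2 + ε : ℝ):ℂ) * s))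
      (by rw [hreB]; nlinarith)
    calc nB ≤ ‖-(((L/2 + ε : ℝ):ℂ) * s)‖ := this
      _ = (L/2 + ε) * ‖s‖ := by
        rw [norm_neg, norm_mul, Complex.norm_real, Real.norm_eq_abs,
          abs_of_pos (by linarith : (0:ℝ) < L/2 + ε)]
  have hB2 : nB ≤ 1 + x ^ (-σ/2) := by
    have h1 := norm_one_sub_cexp_le' (-(((L/2 + ε : ℝ):ℂ) * s))
    rw [hreB] at h1
    have h2 : Real.exp (-((L/2 + ε) * σ)) ≤ x ^ (-σ/2) := by
      rw [Real.rpow_def_of_pos hx0, ← hLdef, Real.exp_le_exp]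
      nlinarith
    linarith
  have hC1 : nC ≤ ε/2 * ‖s‖ := by
    have := norm_one_sub_cexp_le (-(((ε/2 : ℝ):ℂ) * s))
      (by rw [hreC]; nlinarith)
    calc nC ≤ ‖-(((ε/2 : ℝ):ℂ) * s)‖ := this
      _ = ε/2 * ‖s‖ := by
        rw [norm_neg, hdC]
  have hC2 : nC ≤ 2 := by
    have h1 := norm_one_sub_cexp_le' (-(((ε/2 : ℝ):ℂ) * s))
    rw [hreC] at h1
    have : Real.exp (-(ε/2 * σ)) ≤ 1 := by
      rw [Real.exp_le_one_iff]; nlinarith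
    linarith
  have hnB0 : 0 ≤ nB := norm_nonneg _
  have hnC0 : 0 ≤ nC := norm_nonneg _
  clear_value nB nC
  clear hnB hnC hreB hreC e1 e2 e3 e4 hA hdB hdC hs hsre
  generalize hns : ‖s‖ = ns at *
  clear_value s
  clear_value L
  have hExσ : 0 < Real.exp (σ * ε) * x ^ σ :=
    mul_pos (Real.exp_pos _) (Real.rpow_pos_of_pos hx0 σ)
  rw [mul_assoc (Real.exp (σ * ε) * x ^ σ)]
  refine mul_le_mul_of_nonneg_left ?_ (le_of_lt hExσ)
  have hdB0 : (0:ℝ) < ns * L := mul_pos hs0 hL0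
  have hdC0 : (0:ℝ) < ε/2 * ns := mul_pos (by linarith) hs0
  rw [le_min_iff]
  constructor
  · -- bound by 1
    have hb : nB / (ns * L) ≤ 3/4 := by
      rw [div_le_iff₀ hdB0]
      calc nB ≤ (L/2 + ε) * ns := hB1
        _ ≤ 3/4 * (ns * L) := by nlinarith
    have hc : nC / (ε/2 * ns) ≤ 1 := by
      rw [div_le_one hdC0]
      exact hC1
    have h2 : (nC / (ε/2 * ns))^2 ≤ 1 :=
      pow_le_one₀ (div_nonneg hnC0 (le_of_lt hdC0)) hc
    calc nB / (ns * L) * (nC / (ε/2 * ns))^2 ≤ 3/4 * 1 := by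
          apply mul_le_mul hb h2 (by positivity) (by norm_num)
      _ ≤ 1 := by norm_num
  · -- the analytic bound
    apply mul_le_mul
    · exact div_le_div_of_nonneg_right hB2 hdB0.le
    · apply pow_le_pow_left₀ (div_nonneg hnC0 (le_of_lt hdC0))
      calc nC / (ε/2 * ns) ≤ 2 / (ε/2 * ns) :=
            div_le_div_of_nonneg_right hC2 hdC0.le
        _ = 4 / (ε * ns) := by
            rw [div_eq_div_iff hdC0.ne' (mul_pos hε0 hs0).ne']; ring
    · positivity
    · positivity
end
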